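/- For the Cauchy CDF sigmoid f_C(x) = (1/π)·arctan(x) + 1/2, the function softmin_{f_C}(x, 0) := x · f_C(−x) is strictly monotonically increasing in x; its derivative equals 1/2 − (1/π)·arctan(x) − (1/π)·x/(1+x²), which lies strictly in (0, 1) for all real x. -/
import Mathlib


open Real

noncomputable def fC (x : ℝ) : ℝ := (1/π) * arctan x + 1/2

lemma key_arctan (x : ℝ) (hx : 0 < x) : x / (1 + x^2) < arctan x := by
  obtain ⟨c, hc, hderiv⟩ := exists_hasDerivAt_eq_slope arctan (fun y => 1/(1+y^2)) hx
    Real.continuous_arctan.continuousOn (fun y _ => Real.hasDerivAt_arctan y)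
  have hc0 : 0 < c := hc.1
  have hcx : c < x := hc.2
  have hslope : (1:ℝ)/(1+c^2) = arctan x / x := by
    simpa [Real.arctan_zero, slope_def_field] using hderiv
  have h1 : (1:ℝ)/(1+x^2) < 1/(1+c^2) := by
    apply one_div_lt_one_div_of_lt (by positivity)
    nlinarith
  have := h1.trans_eq hslope
  calc x / (1 + x^2) = x * (1/(1+x^2)) := by ring
    _ < x * (arctan x / x) := by
        exact mul_lt_mul_of_pos_left this hx
    _ = arctan x := by field_simp

lemma h_lt (x : ℝ) : arctan x + x / (1 + x^2) < π/2 := by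
  rcases lt_or_ge 0 x with hx | hx
  · have h1 := key_arctan (1/x) (by positivity)
    have h2 : Real.arctan (1/x) = π/2 - arctan x := by
      rw [one_div]; exact Real.arctan_inv_of_pos hx
    have h3 : (1/x) / (1 + (1/x)^2) = x / (1 + x^2) := by
      field_simp; ring
    rw [h3, h2] at h1
    linarith
  · have h1 : arctan x ≤ 0 := by rw [show (0:ℝ) = arctan 0 by simp]; exact Real.arctan_strictMono.monotone hx
    have h2 : x / (1 + x^2) ≤ 0 := div_nonpos_of_nonpos_of_nonneg hx (by positivity)
    nlinarith [Real.pi_pos]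

lemma myDeriv (x : ℝ) : HasDerivAt (fun y : ℝ => y * fC (-y))
    (1/2 - (1/π) * arctan x - (1/π) * (x / (1 + x^2))) x := by
  have h1 : HasDerivAt (fun y : ℝ => arctan (-y)) (-(1/(1+x^2))) x := by
    have h := (Real.hasDerivAt_arctan (-x)).comp x (hasDerivAt_neg x)
    have he : (1 / (1 + (-x)^2)) * (-1) = -(1/(1+x^2)) := by rw [neg_sq]; ring
    rw [he] at h
    exact h
  have h2 : HasDerivAt (fun y : ℝ => fC (-y)) ((1/π) * (-(1/(1+x^2)))) x := by
    unfold fC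
    exact ((h1.const_mul (1/π)).add_const (1/2))
  have h3 := (hasDerivAt_id x).mul h2
  have hformula : 1 * fC (-x) + x * ((1/π) * (-(1/(1+x^2))))
      = 1/2 - (1/π) * arctan x - (1/π) * (x / (1 + x^2)) := by
    unfold fC
    rw [Real.arctan_neg]
    have hx2 : (1:ℝ) + x^2 ≠ 0 := by positivity
    field_simp
    ring
  exact hformula ▸ h3

lemma d_mem (x : ℝ) : (1/2 - (1/π) * arctan x - (1/π) * (x / (1 + x^2))) ∈ Set.Ioo (0:ℝ) 1 := by
  have hp := Real.pi_pos
  have h1 := h_lt x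
  have h2 := h_lt (-x)
  rw [Real.arctan_neg, neg_sq] at h2
  have h2' : -(arctan x + x / (1 + x^2)) < π/2 := by
    have : (-x) / (1 + x^2) = -(x / (1+x^2)) := by ring
    rw [this] at h2; linarith
  constructor
  · rw [sub_sub, ← mul_add]
    have : (1/π) * (arctan x + x / (1 + x^2)) < (1/π) * (π/2) :=
      mul_lt_mul_of_pos_left h1 (by positivity)
    rw [show (1/π) * (π/2) = 1/2 by field_simp] at this
    linarith
  · rw [sub_sub, ← mul_add]
    have : (1/π) * (-(arctan x + x / (1 + x^2))) < (1/π) * (π/2) :=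
      mul_lt_mul_of_pos_left h2' (by positivity)
    rw [show (1/π) * (π/2) = 1/2 by field_simp] at this
    nlinarith [pi_pos]

theorem stmt_1 :
    StrictMono (fun x : ℝ => x * fC (-x)) ∧
    ∀ x : ℝ,
      deriv (fun y : ℝ => y * fC (-y)) x
        = 1/2 - (1/π) * arctan x - (1/π) * (x / (1 + x^2)) ∧
      (1/2 - (1/π) * arctan x - (1/π) * (x / (1 + x^2))) ∈ Set.Ioo (0 : ℝ) 1 := by
  constructor
  · apply strictMono_of_deriv_pos
    intro x
    rw [(myDeriv x).deriv]
    exact (d_mem x).1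
  · intro x
    exact ⟨(myDeriv x).deriv, d_mem x⟩
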